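/- Let M ≥ 2, m > 0, θ > 0, u ∈ ℝ³, and let f(ξ) = Σ_{|α|≤M} f_α ℋ_{θ,α}((ξ−u)/√θ) be a truncated Hermite expansion. Define ρ := m ∫_{ℝ³} f(ξ) dξ, and assume ρ u_i = m ∫_{ℝ³} ξ_i f(ξ) dξ for i = 1,2,3 and ρ|u|² + 3ρθ = m ∫_{ℝ³} |ξ|² f(ξ) dξ. Then for all i, j ∈ {1,2,3}, the stress tensor σ_{ij} := m ∫_{ℝ³} (ξ_i − u_i)(ξ_j − u_j) f(ξ) dξ − ρ θ δ_{ij} satisfies σ_{ij} = (1 + δ_{ij}) f_{e_i + e_j}. -/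

import Mathlib

open MeasureTheory Real

/-- Probabilists' Hermite polynomial `He n` evaluated at `x`. -/
noncomputable def He (n : ℕ) (x : ℝ) : ℝ :=
  (-1 : ℝ) ^ n * Real.exp (x ^ 2 / 2) *
    iteratedDeriv n (fun y : ℝ => Real.exp (-(y ^ 2) / 2)) x

/-- The basis function `ℋ_{θ,α}` with particle mass `m`. -/
noncomputable def Hbasis (m θ : ℝ) (α : Fin 3 → ℕ) (v : Fin 3 → ℝ) : ℝ :=
  (m * (2 * Real.pi * θ) ^ ((3 : ℝ) / 2) * θ ^ (((∑ d, α d : ℕ) : ℝ) / 2))⁻¹ *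
    ∏ d, (He (α d) (v d) * Real.exp (-(v d) ^ 2 / 2))

/-- The set of multi-indices `α ∈ ℕ³` with `|α| ≤ M`. -/
def multiIndices (M : ℕ) : Finset (Fin 3 → ℕ) :=
  (Fintype.piFinset fun _ : Fin 3 => Finset.range (M + 1)).filter fun α => ∑ d, α d ≤ M

/-- The truncated Hermite expansion of order `M` with parameters `(u, θ)`
and coefficients `c`. -/
noncomputable def truncExp (M : ℕ) (m θ : ℝ) (u : Fin 3 → ℝ)
    (c : (Fin 3 → ℕ) → ℝ) (ξ : Fin 3 → ℝ) : ℝ :=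
  ∑ α ∈ multiIndices M, c α * Hbasis m θ α (fun d => (ξ d - u d) / Real.sqrt θ)

open Polynomial

noncomputable def gp (p : Polynomial ℝ) (x : ℝ) : ℝ := aeval x p * Real.exp (-(x ^ 2 / 2))

lemma integrable_pow_gauss (k : ℕ) : Integrable (fun x : ℝ => x ^ k * Real.exp (-(x ^ 2 / 2))) := by
  have h := integrable_rpow_mul_exp_neg_mul_sq (b := 1/2) (by norm_num) (s := (k:ℝ))
    (lt_of_lt_of_le neg_one_lt_zero (Nat.cast_nonneg k))
  refine h.congr (Filter.Eventually.of_forall fun x => ?_)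
  simp only [Real.rpow_natCast]
  ring_nf

lemma integrable_gp (p : Polynomial ℝ) : Integrable (gp p) := by
  have : gp p = fun x => ∑ k ∈ Finset.range (p.natDegree + 1),
      p.coeff k * (x ^ k * Real.exp (-(x ^ 2 / 2))) := by
    funext x
    simp only [gp, aeval_def, eval₂_eq_eval_map, Polynomial.map_id]
    rw [Polynomial.eval_eq_sum_range, Finset.sum_mul]
    simp [mul_assoc, Polynomial.map_id]
  rw [this]
  exact integrable_finset_sum _ fun k _ => (integrable_pow_gauss k).const_mul _

lemma tendsto_pow_gauss_top (k : ℕ) :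
    Filter.Tendsto (fun x : ℝ => x ^ k * Real.exp (-(x ^ 2 / 2))) Filter.atTop (nhds 0) := by
  have h := rpow_mul_exp_neg_mul_sq_isLittleO_exp_neg (b := 1/2) (by norm_num) (k : ℝ)
  have h2 : Filter.Tendsto (fun x : ℝ => Real.exp (-(1/2) * x)) Filter.atTop (nhds 0) := by
    apply Real.tendsto_exp_atBot.comp
    have : Filter.Tendsto (fun x : ℝ => (-(1/2)) * x) Filter.atTop Filter.atBot :=
      Filter.tendsto_id.const_mul_atTop_of_neg (by norm_num)
    exact this
  have := h.isBigO.trans_tendsto h2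
  refine this.congr' (Filter.Eventually.of_forall fun x => ?_)
  simp only [Real.rpow_natCast]
  ring_nf

lemma tendsto_gp_top (p : Polynomial ℝ) : Filter.Tendsto (gp p) Filter.atTop (nhds 0) := by
  have : gp p = fun x => ∑ k ∈ Finset.range (p.natDegree + 1),
      p.coeff k * (x ^ k * Real.exp (-(x ^ 2 / 2))) := by
    funext x
    simp only [gp, aeval_def, eval₂_eq_eval_map, Polynomial.map_id]
    rw [Polynomial.eval_eq_sum_range, Finset.sum_mul]
    simp [mul_assoc, Polynomial.map_id]
  rw [this]
  have : (0 : ℝ) = ∑ k ∈ Finset.range (p.natDegree + 1), p.coeff k * 0 := by simp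
  rw [this]
  exact tendsto_finset_sum _ fun k _ => (tendsto_pow_gauss_top k).const_mul _

lemma tendsto_gp_bot (p : Polynomial ℝ) : Filter.Tendsto (gp p) Filter.atBot (nhds 0) := by
  have h := tendsto_gp_top (p.comp (-X))
  have h2 := h.comp Filter.tendsto_neg_atBot_atTop
  refine h2.congr fun x => ?_
  simp [gp, Function.comp, aeval_comp]

lemma hasDerivAt_gp (p : Polynomial ℝ) (x : ℝ) :
    HasDerivAt (gp p) (gp (derivative p - X * p) x) x := by
  have h1 : HasDerivAt (fun y : ℝ => (aeval y p : ℝ)) (aeval x (derivative p)) x :=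
    p.hasDerivAt_aeval x
  have h2 : HasDerivAt (fun y : ℝ => Real.exp (-(y ^ 2 / 2))) (-x * Real.exp (-(x ^ 2 / 2))) x := by
    have : HasDerivAt (fun y : ℝ => -(y ^ 2 / 2)) (-x) x := by
      have h4 := ((hasDerivAt_pow 2 x).div_const 2).neg; simp at h4; exact h4
    have h3 := this.exp
    convert h3 using 1
    ring
  have : HasDerivAt (gp p) (aeval x (derivative p) * Real.exp (-(x ^ 2 / 2)) + aeval x p * (-x * Real.exp (-(x ^ 2 / 2)))) x := h1.mul h2
  convert this using 1
  simp [gp]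
  ring

/-- Master integration-by-parts identity. -/
lemma integral_gp_X (p : Polynomial ℝ) : ∫ x, gp (X * p) x = ∫ x, gp (derivative p) x := by
  have key : ∫ x, gp (derivative p - X * p) x = 0 - 0 :=
    MeasureTheory.integral_of_hasDerivAt_of_tendsto (hasDerivAt_gp p)
      (integrable_gp _) (tendsto_gp_bot p) (tendsto_gp_top p)
  have hsub : ∀ x, gp (derivative p - X * p) x = gp (derivative p) x - gp (X * p) x := by
    intro x; simp [gp]; ring
  rw [MeasureTheory.integral_congr_ae (Filter.Eventually.of_forall hsub),
    MeasureTheory.integral_sub (integrable_gp _) (integrable_gp _)] at key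
  linarith

lemma derivative_hermite (n : ℕ) : derivative (hermite n) = n • hermite (n - 1) := by
  induction n with
  | zero => simp [hermite_zero]
  | succ n ih =>
    cases n with
    | zero => simp [hermite_one, hermite_zero]
    | succ k =>
      rw [hermite_succ (k+1), derivative_sub, derivative_mul, derivative_X, one_mul, ih,
        Nat.succ_sub_one, derivative_smul, Nat.succ_sub_one, mul_smul_comm, add_sub_assoc, ← smul_sub,
        ← hermite_succ, succ_nsmul]
      simp [add_smul, add_comm]

lemma gp_sub (p q : Polynomial ℝ) (x : ℝ) : gp (p - q) x = gp p x - gp q x := by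
  simp [gp]; ring

lemma gp_nsmul (n : ℕ) (p : Polynomial ℝ) (x : ℝ) : gp (n • p) x = n * gp p x := by
  simp [gp]; ring

noncomputable def herm (n : ℕ) : Polynomial ℝ := (hermite n).map (Int.castRingHom ℝ)

lemma herm_succ (n : ℕ) : herm (n+1) = X * herm n - derivative (herm n) := by
  simp [herm, hermite_succ, Polynomial.derivative_map]

lemma herm_zero : herm 0 = 1 := by simp [herm, hermite_zero]

lemma derivative_herm (n : ℕ) : derivative (herm n) = n • herm (n - 1) := by
  rw [herm, Polynomial.derivative_map, derivative_hermite, nsmul_eq_mul, Polynomial.map_mul,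
    nsmul_eq_mul]
  simp [herm]

lemma aeval_herm (n : ℕ) (x : ℝ) : (aeval x (hermite n) : ℝ) = eval x (herm n) := by
  rw [aeval_def, eval₂_eq_eval_map]; rfl

lemma sqrt_two_pi : ∫ x : ℝ, Real.exp (-(x ^ 2 / 2)) = Real.sqrt (2 * Real.pi) := by
  have h := integral_gaussian (1/2)
  rw [show Real.pi / (1/2) = 2 * Real.pi by ring] at h
  rw [← h]
  congr 1; funext x; ring_nf

lemma int_gp_herm (n : ℕ) :
    ∫ x, gp (herm n) x = if n = 0 then Real.sqrt (2 * Real.pi) else 0 := by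
  cases n with
  | zero =>
    simp only [if_pos rfl, herm_zero]
    rw [← sqrt_two_pi]
    congr 1; funext x; simp [gp]
  | succ n =>
    simp only [Nat.succ_ne_zero, if_false]
    rw [herm_succ]
    calc ∫ x, gp (X * herm n - derivative (herm n)) x
        = (∫ x, gp (X * herm n) x) - ∫ x, gp (derivative (herm n)) x := by
          simp_rw [gp_sub]
          exact MeasureTheory.integral_sub (integrable_gp _) (integrable_gp _)
      _ = 0 := by rw [integral_gp_X]; ring

lemma int_gp_X_herm (n : ℕ) :
    ∫ x, gp (X * herm n) x = if n = 1 then Real.sqrt (2 * Real.pi) else 0 := by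
  rw [integral_gp_X, derivative_herm]
  simp_rw [gp_nsmul]
  rw [MeasureTheory.integral_const_mul, int_gp_herm]
  match n with
  | 0 => simp
  | 1 => simp
  | (k+2) => simp

lemma int_gp_X2_herm (n : ℕ) :
    ∫ x, gp (X ^ 2 * herm n) x =
      if n = 0 then Real.sqrt (2 * Real.pi) else if n = 2 then 2 * Real.sqrt (2 * Real.pi) else 0 := by
  have h1 : (X : Polynomial ℝ) ^ 2 * herm n = X * (X * herm n) := by ring
  rw [h1, integral_gp_X, derivative_mul, derivative_X, one_mul, derivative_herm]
  have h2 : ∀ x, gp (herm n + X * (n • herm (n-1))) x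
      = gp (herm n) x + n * gp (X * herm (n-1)) x := by
    intro x; simp [gp]; ring
  simp_rw [mul_smul_comm] at h2 ⊢
  rw [MeasureTheory.integral_congr_ae (Filter.Eventually.of_forall h2),
    MeasureTheory.integral_add (integrable_gp _) (((integrable_gp _).const_mul _))]
  rw [MeasureTheory.integral_const_mul, int_gp_herm, int_gp_X_herm]
  match n with
  | 0 => simp
  | 1 => simp
  | 2 => simp
  | (k+3) => simp

noncomputable def He' (n : ℕ) (x : ℝ) : ℝ :=
  (-1 : ℝ) ^ n * Real.exp (x ^ 2 / 2) *
    iteratedDeriv n (fun y : ℝ => Real.exp (-(y ^ 2) / 2)) x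

lemma He'_eq (n : ℕ) (x : ℝ) : He' n x = eval x (herm n) := by
  rw [He', iteratedDeriv_eq_iterate]
  have hfun : (fun y : ℝ => Real.exp (-(y ^ 2) / 2)) = fun y => Real.exp (-(y ^ 2 / 2)) := by
    funext y; ring_nf
  rw [hfun, Polynomial.deriv_gaussian_eq_hermite_mul_gaussian, aeval_herm]
  have e1 : Real.exp (x ^ 2 / 2) * Real.exp (-(x ^ 2 / 2)) = 1 := by
    rw [← Real.exp_add]; simp
  have e2 : ((-1 : ℝ) ^ n) * ((-1 : ℝ) ^ n) = 1 := by
    rw [← mul_pow]; norm_num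
  calc (-1:ℝ) ^ n * Real.exp (x ^ 2 / 2) * ((-1:ℝ) ^ n * eval x (herm n) * Real.exp (-(x ^ 2 / 2)))
      = (((-1:ℝ) ^ n) * ((-1:ℝ) ^ n)) * (Real.exp (x ^ 2 / 2) * Real.exp (-(x ^ 2 / 2)))
        * eval x (herm n) := by ring
    _ = eval x (herm n) := by rw [e1, e2]; ring

lemma He'_gauss (n : ℕ) (x : ℝ) : He' n x * Real.exp (-x ^ 2 / 2) = gp (herm n) x := by
  rw [He'_eq, gp]
  have : -x ^ 2 / 2 = -(x ^ 2 / 2) := by ring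
  rw [this]
  simp [coe_aeval_eq_eval]

/-- 1D substitution lemma. -/
lemma oneD {θ : ℝ} (hθ : 0 < θ) (a : ℝ) (k n : ℕ) :
    ∫ x : ℝ, (x - a) ^ k * (He' n ((x - a) / Real.sqrt θ) *
      Real.exp (-((x - a) / Real.sqrt θ) ^ 2 / 2))
    = Real.sqrt θ ^ (k + 1) * ∫ y : ℝ, gp (X ^ k * herm n) y := by
  have hs : (0:ℝ) < Real.sqrt θ := Real.sqrt_pos.2 hθ
  have key : ∀ t : ℝ, t ^ k * (He' n (t / Real.sqrt θ) * Real.exp (-(t / Real.sqrt θ) ^ 2 / 2))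
      = Real.sqrt θ ^ k * gp (X ^ k * herm n) (t / Real.sqrt θ) := by
    intro t
    rw [He'_gauss, gp, gp]
    have ht : t ^ k = Real.sqrt θ ^ k * (t / Real.sqrt θ) ^ k := by
      rw [← mul_pow]; congr 1; field_simp
    rw [ht]
    simp [aeval_def]
    ring
  calc ∫ x : ℝ, (x - a) ^ k * (He' n ((x - a) / Real.sqrt θ) *
        Real.exp (-((x - a) / Real.sqrt θ) ^ 2 / 2))
      = ∫ x : ℝ, Real.sqrt θ ^ k * gp (X ^ k * herm n) ((x - a) / Real.sqrt θ) := by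
        congr 1; funext x; exact key (x - a)
    _ = ∫ x : ℝ, Real.sqrt θ ^ k * gp (X ^ k * herm n) (x / Real.sqrt θ) := by
        exact integral_sub_right_eq_self (fun x => Real.sqrt θ ^ k *
          gp (X ^ k * herm n) (x / Real.sqrt θ)) a
    _ = Real.sqrt θ ^ k * ∫ x : ℝ, gp (X ^ k * herm n) (x / Real.sqrt θ) :=
        MeasureTheory.integral_const_mul _ _
    _ = Real.sqrt θ ^ (k + 1) * ∫ y : ℝ, gp (X ^ k * herm n) y := by
        rw [MeasureTheory.Measure.integral_comp_div (gp (X ^ k * herm n)) (Real.sqrt θ),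
          abs_of_pos hs, smul_eq_mul, pow_succ]
        ring

lemma integrable_oneD {θ : ℝ} (hθ : 0 < θ) (a : ℝ) (k n : ℕ) :
    Integrable (fun x : ℝ => (x - a) ^ k * (He' n ((x - a) / Real.sqrt θ) *
      Real.exp (-((x - a) / Real.sqrt θ) ^ 2 / 2))) := by
  have hs : Real.sqrt θ ≠ 0 := (Real.sqrt_pos.2 hθ).ne'
  have h1 : Integrable (fun x : ℝ => gp (X ^ k * herm n) (x / Real.sqrt θ)) :=
    (integrable_gp _).comp_div hs
  have h2 := (h1.const_mul (Real.sqrt θ ^ k)).comp_sub_right a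
  refine h2.congr (Filter.Eventually.of_forall fun x => ?_)
  show _ = (x - a) ^ k * (He' n ((x - a) / Real.sqrt θ) *
      Real.exp (-((x - a) / Real.sqrt θ) ^ 2 / 2))
  symm
  rw [He'_gauss]
  simp only [gp]
  have ht : (x - a) ^ k = Real.sqrt θ ^ k * ((x - a) / Real.sqrt θ) ^ k := by
    rw [← mul_pow]; congr 1; field_simp
  rw [ht]
  simp [aeval_def]
  ring

lemma He_eq_He' : He = He' := rfl

lemma mem_multiIndices {M : ℕ} {β : Fin 3 → ℕ} (h : ∑ d, β d ≤ M) : β ∈ multiIndices M := by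
  rw [multiIndices, Finset.mem_filter]
  refine ⟨Fintype.mem_piFinset.2 fun d => ?_, h⟩
  rw [Finset.mem_range]
  exact lt_of_le_of_lt (le_trans (Finset.single_le_sum (f := β) (fun d _ => Nat.zero_le _)
    (Finset.mem_univ d)) h) (Nat.lt_succ_self M)

noncomputable def V (k n : ℕ) : ℝ := ∫ y : ℝ, gp (X ^ k * herm n) y

set_option maxHeartbeats 1000000 in
/-- Master formula. -/
lemma master (M : ℕ) (m θ : ℝ) (hθ : 0 < θ) (u : Fin 3 → ℝ)
    (c : (Fin 3 → ℕ) → ℝ) (β : Fin 3 → ℕ) :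
    ∫ ξ : Fin 3 → ℝ, (∏ d, (ξ d - u d) ^ (β d)) * truncExp M m θ u c ξ
    = ∑ α ∈ multiIndices M, c α *
        ((m * (2 * Real.pi * θ) ^ ((3 : ℝ) / 2) * θ ^ (((∑ d, α d : ℕ) : ℝ) / 2))⁻¹ *
         ∏ d, (Real.sqrt θ ^ (β d + 1) * V (β d) (α d))) := by
  set F : (Fin 3 → ℕ) → (Fin 3) → ℝ → ℝ := fun α d x =>
    (x - u d) ^ (β d) * (He' (α d) ((x - u d) / Real.sqrt θ) *
      Real.exp (-((x - u d) / Real.sqrt θ) ^ 2 / 2)) with hF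
  have hint : ∀ α : Fin 3 → ℕ, Integrable (fun ξ : Fin 3 → ℝ =>
      (c α * (m * (2 * Real.pi * θ) ^ ((3 : ℝ) / 2) * θ ^ (((∑ d, α d : ℕ) : ℝ) / 2))⁻¹)
        * ∏ d, F α d (ξ d)) := fun α =>
    (Integrable.fintype_prod (𝕜 := ℝ) fun d => integrable_oneD hθ (u d) (β d) (α d)).const_mul _
  have hpoint : ∀ ξ : Fin 3 → ℝ, (∏ d, (ξ d - u d) ^ (β d)) * truncExp M m θ u c ξ
      = ∑ α ∈ multiIndices M, (c α *
          (m * (2 * Real.pi * θ) ^ ((3 : ℝ) / 2) * θ ^ (((∑ d, α d : ℕ) : ℝ) / 2))⁻¹) *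
          ∏ d, F α d (ξ d) := by
    intro ξ
    rw [truncExp, Finset.mul_sum]
    refine Finset.sum_congr rfl fun α _ => ?_
    have hsplit : ∏ d, F α d (ξ d) = (∏ d, (ξ d - u d) ^ (β d)) *
        ∏ d, (He' (α d) ((ξ d - u d) / Real.sqrt θ) *
          Real.exp (-((ξ d - u d) / Real.sqrt θ) ^ 2 / 2)) := by
      rw [hF, ← Finset.prod_mul_distrib]
    rw [Hbasis, He_eq_He', hsplit]
    ring
  rw [MeasureTheory.integral_congr_ae (Filter.Eventually.of_forall hpoint)]
  rw [MeasureTheory.integral_finset_sum _ (fun α _ => hint α)]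
  refine Finset.sum_congr rfl fun α _ => ?_
  rw [MeasureTheory.integral_const_mul,
    MeasureTheory.integral_fintype_prod_volume_eq_prod (𝕜 := ℝ) (f := F α)]
  rw [mul_assoc]
  congr 2
  refine Finset.prod_congr rfl fun d _ => ?_
  exact oneD hθ (u d) (β d) (α d)

noncomputable def S : ℝ := Real.sqrt (2 * Real.pi)

lemma S_pos : 0 < S := Real.sqrt_pos.2 (by positivity)

lemma V0 (n : ℕ) : V 0 n = if n = 0 then S else 0 := by
  rw [V, S, ← int_gp_herm]; congr 1; rw [pow_zero, one_mul]

lemma V1 (n : ℕ) : V 1 n = if n = 1 then S else 0 := by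
  rw [V, S, ← int_gp_X_herm]; congr 1; rw [pow_one]

lemma V2 (n : ℕ) : V 2 n = if n = 0 then S else if n = 2 then 2 * S else 0 := by
  rw [V, S, ← int_gp_X2_herm]

lemma rpow_32 {θ : ℝ} (hθ : 0 < θ) : (2 * Real.pi * θ) ^ ((3 : ℝ) / 2) = (S * Real.sqrt θ) ^ 3 := by
  have h2π : (0:ℝ) ≤ 2 * Real.pi := by positivity
  have h1 : S * Real.sqrt θ = Real.sqrt (2 * Real.pi * θ) := (Real.sqrt_mul h2π θ).symm
  rw [h1, Real.sqrt_eq_rpow, ← Real.rpow_natCast ((2*Real.pi*θ) ^ ((1:ℝ)/2)) 3,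
    ← Real.rpow_mul (by positivity)]
  norm_num

lemma prod_pow_single (f : Fin 3 → ℝ) (i : Fin 3) :
    ∏ d, f d ^ (Pi.single i (1:ℕ) d) = f i := by
  rw [Finset.prod_eq_single i]
  · simp
  · intro b _ hb; simp [Pi.single_eq_of_ne hb]
  · simp

lemma prod_pow_double (f : Fin 3 → ℝ) (i j : Fin 3) :
    ∏ d, f d ^ ((Pi.single i 1 + Pi.single j 1 : Fin 3 → ℕ) d) = f i * f j := by
  simp only [Pi.add_apply, pow_add, Finset.prod_mul_distrib, prod_pow_single]

lemma sum_single_double (i j : Fin 3) :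
    ∑ d, (Pi.single i 1 + Pi.single j 1 : Fin 3 → ℕ) d = 2 := by
  simp only [Pi.add_apply, Finset.sum_add_distrib]
  rw [Finset.sum_pi_single', Finset.sum_pi_single']
  simp

lemma beta_apply (i j d : Fin 3) :
    (Pi.single i 1 + Pi.single j 1 : Fin 3 → ℕ) d
      = (if d = i then 1 else 0) + (if d = j then 1 else 0) := by
  simp [Pi.single_apply]

lemma prodV_offdiag (i j : Fin 3) (hij : i ≠ j) (α : Fin 3 → ℕ) :
    ∏ d, V ((Pi.single i 1 + Pi.single j 1 : Fin 3 → ℕ) d) (α d)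
      = if α = (Pi.single i 1 + Pi.single j 1 : Fin 3 → ℕ) then S ^ 3 else 0 := by
  set β : Fin 3 → ℕ := Pi.single i 1 + Pi.single j 1 with hβdef
  have hβ01 : ∀ d, β d = 0 ∨ β d = 1 := by
    intro d
    rw [hβdef, beta_apply]
    rcases eq_or_ne d i with rfl | hdi
    · rw [if_pos rfl, if_neg hij]; right; rfl
    · rw [if_neg hdi]; rcases eq_or_ne d j with rfl | hdj
      · rw [if_pos rfl]; right; rfl
      · rw [if_neg hdj]; left; rfl
  by_cases hα : α = β
  · subst hα
    rw [if_pos rfl]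
    have hval : ∀ d ∈ Finset.univ, V (β d) (β d) = S := by
      intro d _
      rcases hβ01 d with h | h <;> rw [h] <;> simp [V0, V1]
    rw [Finset.prod_congr rfl hval, Finset.prod_const]
    simp
  · rw [if_neg hα]
    obtain ⟨d, hd⟩ := Function.ne_iff.1 hα
    refine Finset.prod_eq_zero (Finset.mem_univ d) ?_
    rcases hβ01 d with h | h <;> rw [h] at hd ⊢
    · rw [V0, if_neg hd]
    · rw [V1, if_neg hd]

lemma prodV_diag (i : Fin 3) (α : Fin 3 → ℕ) :
    ∏ d, V ((Pi.single i 1 + Pi.single i 1 : Fin 3 → ℕ) d) (α d)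
      = (if α = 0 then S ^ 3 else 0)
        + (if α = (Pi.single i 1 + Pi.single i 1 : Fin 3 → ℕ) then 2 * S ^ 3 else 0) := by
  set β : Fin 3 → ℕ := Pi.single i 1 + Pi.single i 1 with hβdef
  have hβ : ∀ d, β d = if d = i then 2 else 0 := by
    intro d
    rw [hβdef, beta_apply]
    split <;> rfl
  have hβi : β i = 2 := by rw [hβ]; simp
  by_cases hoff : ∀ d, d ≠ i → α d = 0
  · rw [Finset.prod_eq_mul_prod_sdiff_singleton_of_mem (Finset.mem_univ i)]
    have hrest : ∀ d ∈ Finset.univ \ {i}, V (β d) (α d) = S := by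
      intro d hd
      have hdi : d ≠ i := by simpa using (Finset.mem_sdiff.1 hd).2
      rw [hβ, if_neg hdi, hoff d hdi, V0, if_pos rfl]
    rw [Finset.prod_congr rfl hrest, Finset.prod_const]
    have hcard : (Finset.univ \ {i} : Finset (Fin 3)).card = 2 := by
      rw [Finset.card_sdiff_of_subset (by simp)]
      simp
    rw [hcard, hβi, V2]
    rcases eq_or_ne (α i) 0 with h0 | h0
    · have hα0 : α = 0 := by
        funext d
        rcases eq_or_ne d i with rfl | hdi
        · exact h0
        · exact hoff d hdi
      have hne : α ≠ β := by
        intro hc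
        have h2 := congrFun hc i
        rw [h0] at h2
        rw [hβi] at h2
        omega
      rw [if_pos h0, if_pos hα0, if_neg hne]
      ring
    · have hne0 : α ≠ 0 := fun hc => h0 (by rw [hc]; rfl)
      rw [if_neg h0]
      rcases eq_or_ne (α i) 2 with h2 | h2
      · have hαβ : α = β := by
          funext d
          rcases eq_or_ne d i with rfl | hdi
          · rw [h2, hβi]
          · rw [hoff d hdi, hβ, if_neg hdi]
        rw [if_pos h2, if_neg hne0, if_pos hαβ]
        ring
      · have hneβ : α ≠ β := fun hc => h2 (by rw [hc]; exact hβi)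
        rw [if_neg h2, if_neg hne0, if_neg hneβ]
        ring
  · push_neg at hoff
    obtain ⟨d, hdi, hd0⟩ := hoff
    have hne0 : α ≠ 0 := fun hc => hd0 (by rw [hc]; rfl)
    have hneβ : α ≠ β := fun hc => hd0 (by rw [hc, hβ, if_neg hdi])
    rw [Finset.prod_eq_zero (Finset.mem_univ d) (by rw [hβ, if_neg hdi, V0, if_neg hd0]),
      if_neg hne0, if_neg hneβ]
    ring

lemma prodV_zero (α : Fin 3 → ℕ) :
    ∏ d, V 0 (α d) = if α = 0 then S ^ 3 else 0 := by
  by_cases hα : α = 0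
  · subst hα
    rw [if_pos rfl]
    have : ∀ d ∈ Finset.univ, V 0 ((0 : Fin 3 → ℕ) d) = S := by
      intro d _; rw [Pi.zero_apply, V0, if_pos rfl]
    rw [Finset.prod_congr rfl this, Finset.prod_const]
    simp
  · rw [if_neg hα]
    obtain ⟨d, hd⟩ := Function.ne_iff.1 hα
    exact Finset.prod_eq_zero (Finset.mem_univ d)
      (by rw [V0, if_neg (by simpa using hd)])

lemma sum_ite_weight (M : ℕ) (φ : (Fin 3 → ℕ) → ℝ) (β : Fin 3 → ℕ) (hβ : ∑ d, β d ≤ M) :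
    ∑ α ∈ multiIndices M, (if α = β then φ α else 0) = φ β := by
  rw [Finset.sum_ite_eq' (multiIndices M) β φ, if_pos (mem_multiIndices hβ)]

lemma prod_sqrt_pow (θ : ℝ) (i j : Fin 3) :
    ∏ d, Real.sqrt θ ^ ((Pi.single i 1 + Pi.single j 1 : Fin 3 → ℕ) d + 1)
      = Real.sqrt θ ^ 5 := by
  rw [Finset.prod_pow_eq_pow_sum]
  congr 1
  rw [Finset.sum_add_distrib, sum_single_double]
  simp

lemma rho_eval (M : ℕ) (m θ : ℝ) (hm : 0 < m) (hθ : 0 < θ) (u : Fin 3 → ℝ)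
    (c : (Fin 3 → ℕ) → ℝ) (hM : 2 ≤ M) :
    m * ∫ ξ : Fin 3 → ℝ, truncExp M m θ u c ξ = c 0 := by
  have h0 : ∫ ξ : Fin 3 → ℝ, truncExp M m θ u c ξ
      = ∫ ξ : Fin 3 → ℝ, (∏ d, (ξ d - u d) ^ ((0 : Fin 3 → ℕ) d)) * truncExp M m θ u c ξ := by
    congr 1; funext ξ; simp
  rw [h0, master M m θ hθ u c 0]
  have hsummand : ∀ α ∈ multiIndices M, c α *
      ((m * (2 * Real.pi * θ) ^ ((3 : ℝ) / 2) * θ ^ (((∑ d, α d : ℕ) : ℝ) / 2))⁻¹ *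
        ∏ d, (Real.sqrt θ ^ ((0 : Fin 3 → ℕ) d + 1) * V ((0 : Fin 3 → ℕ) d) (α d)))
      = if α = 0 then c 0 * ((m * (2 * Real.pi * θ) ^ ((3 : ℝ) / 2) *
          θ ^ (((0 : ℕ) : ℝ) / 2))⁻¹ * (Real.sqrt θ ^ 3 * S ^ 3)) else 0 := by
    intro α _
    rw [Finset.prod_mul_distrib]
    simp only [Pi.zero_apply, zero_add, pow_one, Finset.prod_const, Finset.card_univ,
      Fintype.card_fin]
    rw [prodV_zero]
    by_cases hα : α = 0
    · subst hα
      rw [if_pos rfl, if_pos rfl]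
      norm_num
    · rw [if_neg hα, if_neg hα]
      ring
  rw [Finset.sum_congr rfl hsummand, sum_ite_weight M _ 0 (by simp)]
  rw [rpow_32 hθ]
  have hS := S_pos
  have hs : (0:ℝ) < Real.sqrt θ := Real.sqrt_pos.2 hθ
  rw [show ((0:ℕ):ℝ)/2 = 0 by norm_num, Real.rpow_zero]
  field_simp

lemma offdiag_eval (M : ℕ) (hM : 2 ≤ M) (m θ : ℝ) (hm : 0 < m) (hθ : 0 < θ) (u : Fin 3 → ℝ)
    (c : (Fin 3 → ℕ) → ℝ) (i j : Fin 3) (hij : i ≠ j) :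
    m * ∫ ξ : Fin 3 → ℝ, (ξ i - u i) * (ξ j - u j) * truncExp M m θ u c ξ
      = c (Pi.single i 1 + Pi.single j 1) := by
  set β : Fin 3 → ℕ := Pi.single i 1 + Pi.single j 1 with hβdef
  have h0 : ∫ ξ : Fin 3 → ℝ, (ξ i - u i) * (ξ j - u j) * truncExp M m θ u c ξ
      = ∫ ξ : Fin 3 → ℝ, (∏ d, (ξ d - u d) ^ (β d)) * truncExp M m θ u c ξ := by
    congr 1; funext ξ
    rw [hβdef, prod_pow_double (fun d => ξ d - u d) i j]
  rw [h0, master M m θ hθ u c β]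
  have hsummand : ∀ α ∈ multiIndices M, c α *
      ((m * (2 * Real.pi * θ) ^ ((3 : ℝ) / 2) * θ ^ (((∑ d, α d : ℕ) : ℝ) / 2))⁻¹ *
        ∏ d, (Real.sqrt θ ^ (β d + 1) * V (β d) (α d)))
      = if α = β then c β * ((m * (2 * Real.pi * θ) ^ ((3 : ℝ) / 2) *
          θ ^ (((2 : ℕ) : ℝ) / 2))⁻¹ * (Real.sqrt θ ^ 5 * S ^ 3)) else 0 := by
    intro α _
    rw [Finset.prod_mul_distrib, hβdef, prod_sqrt_pow, prodV_offdiag i j hij]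
    rw [← hβdef]
    by_cases hα : α = β
    · subst hα
      rw [if_pos rfl, if_pos rfl, hβdef, sum_single_double]
    · rw [if_neg hα, if_neg hα]
      ring
  rw [Finset.sum_congr rfl hsummand,
    sum_ite_weight M _ β (by rw [hβdef, sum_single_double]; exact hM)]
  rw [rpow_32 hθ, show (((2:ℕ)):ℝ)/2 = 1 by norm_num, Real.rpow_one]
  have hS := S_pos
  have hs : (0:ℝ) < Real.sqrt θ := Real.sqrt_pos.2 hθ
  have hsq : Real.sqrt θ ^ 2 = θ := Real.sq_sqrt hθ.le
  have h5 : Real.sqrt θ ^ 5 = Real.sqrt θ ^ 3 * θ := by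
    calc Real.sqrt θ ^ 5 = Real.sqrt θ ^ 3 * Real.sqrt θ ^ 2 := by ring
      _ = Real.sqrt θ ^ 3 * θ := by rw [hsq]
  rw [h5]
  field_simp

lemma diag_eval (M : ℕ) (hM : 2 ≤ M) (m θ : ℝ) (hm : 0 < m) (hθ : 0 < θ) (u : Fin 3 → ℝ)
    (c : (Fin 3 → ℕ) → ℝ) (i : Fin 3) :
    m * ∫ ξ : Fin 3 → ℝ, (ξ i - u i) * (ξ i - u i) * truncExp M m θ u c ξ
      = c 0 * θ + 2 * c (Pi.single i 1 + Pi.single i 1) := by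
  set β : Fin 3 → ℕ := Pi.single i 1 + Pi.single i 1 with hβdef
  have h0 : ∫ ξ : Fin 3 → ℝ, (ξ i - u i) * (ξ i - u i) * truncExp M m θ u c ξ
      = ∫ ξ : Fin 3 → ℝ, (∏ d, (ξ d - u d) ^ (β d)) * truncExp M m θ u c ξ := by
    congr 1; funext ξ
    rw [hβdef, prod_pow_double (fun d => ξ d - u d) i i]
  rw [h0, master M m θ hθ u c β]
  have hsummand : ∀ α ∈ multiIndices M, c α *
      ((m * (2 * Real.pi * θ) ^ ((3 : ℝ) / 2) * θ ^ (((∑ d, α d : ℕ) : ℝ) / 2))⁻¹ *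
        ∏ d, (Real.sqrt θ ^ (β d + 1) * V (β d) (α d)))
      = (if α = 0 then c 0 * ((m * (2 * Real.pi * θ) ^ ((3 : ℝ) / 2) *
          θ ^ (((0 : ℕ) : ℝ) / 2))⁻¹ * (Real.sqrt θ ^ 5 * S ^ 3)) else 0)
        + (if α = β then c β * ((m * (2 * Real.pi * θ) ^ ((3 : ℝ) / 2) *
          θ ^ (((2 : ℕ) : ℝ) / 2))⁻¹ * (Real.sqrt θ ^ 5 * (2 * S ^ 3))) else 0) := by
    intro α _
    rw [Finset.prod_mul_distrib, hβdef, prod_sqrt_pow, prodV_diag i]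
    rw [← hβdef]
    by_cases hα0 : α = 0
    · have hne : α ≠ β := by
        intro hc
        rw [hα0] at hc
        have := congrFun hc.symm i
        rw [hβdef] at this
        simp [Pi.single_apply] at this
      subst hα0
      rw [if_pos rfl, if_pos rfl, if_neg hne, if_neg hne]
      simp only [Pi.zero_apply, Finset.sum_const_zero]
      ring
    · by_cases hαβ : α = β
      · subst hαβ
        rw [if_pos rfl, if_pos rfl, if_neg hα0, if_neg hα0, hβdef, sum_single_double]
        ring
      · rw [if_neg hα0, if_neg hα0, if_neg hαβ, if_neg hαβ]
        ring
  rw [Finset.sum_congr rfl hsummand, Finset.sum_add_distrib,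
    sum_ite_weight M _ 0 (by simp),
    sum_ite_weight M _ β (by rw [hβdef, sum_single_double]; exact hM)]
  rw [rpow_32 hθ, show (((2:ℕ)):ℝ)/2 = 1 by norm_num, Real.rpow_one,
    show (((0:ℕ)):ℝ)/2 = 0 by norm_num, Real.rpow_zero]
  have hS := S_pos
  have hs : (0:ℝ) < Real.sqrt θ := Real.sqrt_pos.2 hθ
  have hsq : Real.sqrt θ ^ 2 = θ := Real.sq_sqrt hθ.le
  have h5 : Real.sqrt θ ^ 5 = Real.sqrt θ ^ 3 * θ := by
    calc Real.sqrt θ ^ 5 = Real.sqrt θ ^ 3 * Real.sqrt θ ^ 2 := by ring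
      _ = Real.sqrt θ ^ 3 * θ := by rw [hsq]
  rw [h5]
  field_simp

theorem stmt_6 (M : ℕ) (hM : 2 ≤ M) (m θ : ℝ) (hm : 0 < m) (hθ : 0 < θ)
    (u : Fin 3 → ℝ) (c : (Fin 3 → ℕ) → ℝ)
    (ρ : ℝ) (hρ : ρ = m * ∫ ξ : Fin 3 → ℝ, truncExp M m θ u c ξ)
    (hu : ∀ i : Fin 3, ρ * u i = m * ∫ ξ : Fin 3 → ℝ, ξ i * truncExp M m θ u c ξ)
    (hθtemp : ρ * (∑ d, u d ^ 2) + 3 * ρ * θ =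
      m * ∫ ξ : Fin 3 → ℝ, (∑ d, ξ d ^ 2) * truncExp M m θ u c ξ)
    (i j : Fin 3) (σ : ℝ)
    (hσ : σ = (m * ∫ ξ : Fin 3 → ℝ, (ξ i - u i) * (ξ j - u j) * truncExp M m θ u c ξ) -
      ρ * θ * (if i = j then (1 : ℝ) else 0)) :
    σ = (1 + if i = j then (1 : ℝ) else 0) * c (Pi.single i 1 + Pi.single j 1) := by
  rcases eq_or_ne i j with rfl | hij
  · rw [hσ, if_pos rfl, diag_eval M hM m θ hm hθ u c i]
    have hρc : ρ = c 0 := by rw [hρ, rho_eval M m θ hm hθ u c hM]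
    rw [hρc]
    ring
  · rw [hσ, if_neg hij, offdiag_eval M hM m θ hm hθ u c i j hij]
    ring
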